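/- Let k be a field and A a finite set of points of k^n, and let I(A) = {f ∈ k[X_1,…,X_n] : f(a) = 0 for all a ∈ A} be its vanishing ideal. Then an exponent β ∈ ℕ₀^n occurs as the lexicographic leading exponent (with X_1 < X_2 < … < X_n) of some nonzero element of I(A) if and only if β ∉ D(A). Equivalently, D(A) is exactly the set of exponents that are not leading exponents of elements of I(A). -/

import Mathlib

/-- `D ∈ 𝒟ₙ`: a finite set `D ⊆ ℕ₀ⁿ` (given as a `Finset`) such that whenever `d ∈ D`
and `dᵢ ≠ 0`, then `d − eᵢ ∈ D`. -/
def IsDset {n : ℕ} (D : Finset (Fin n → ℕ)) : Prop :=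
  ∀ d ∈ D, ∀ i : Fin n, d i ≠ 0 → d - Pi.single i 1 ∈ D

variable {k : Type*} [Field k] [DecidableEq k]

/-- The set `D(A) ⊆ ℕ₀ⁿ` attached to a finite set of points `A ⊆ kⁿ`, defined by
induction on `n`.  For `n = 0`, `D(A)` is empty if `A` is and the single point of `ℕ₀⁰`
otherwise (so that for `n = 1` one gets `D(A) = {0, 1, …, #A − 1}`).  For `n + 1`:
writing `p(A)` for the set of first coordinates of `A` and
`H a₁ = p⁻¹(a₁) ∩ A ⊆ kⁿ` (via the projection `Fin.tail` forgetting the first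
coordinate), `D(A) = Σ_{a₁ ∈ p(A)} D(H a₁)`, the sum with respect to the addition `+`
on `𝒟`; spelled out via the closed formula for such sums, `d ∈ D(A)` iff
`Fin.tail d ∈ ⋃_{a₁ ∈ p(A)} D(H a₁)` and `d 0 < #{a₁ ∈ p(A) : Fin.tail d ∈ D(H a₁)}`. -/
def DofA : (n : ℕ) → Finset (Fin n → k) → Finset (Fin n → ℕ)
  | 0, A => A.image (fun _ => (fun _ => 0))
  | (n + 1), A =>
      ((A.image (fun a => a 0)).biUnion
          (fun a1 => DofA n ((A.filter (fun a => a 0 = a1)).image (fun a => Fin.tail a)))).biUnion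
        (fun dh =>
          (Finset.range
              (((A.image (fun a => a 0)).filter
                  (fun a1 =>
                    dh ∈ DofA n ((A.filter (fun a => a 0 = a1)).image (fun a => Fin.tail a)))).card)).image
            (fun j => Fin.cons j dh))


/-- The strict lexicographic order on exponent vectors corresponding to the
lexicographic monomial ordering with `X₁ < X₂ < … < Xₙ`: the exponents of the
variables with *larger* index are compared first. -/
def lexLt {n : ℕ} (α β : Fin n → ℕ) : Prop :=
  ∃ i : Fin n, α i < β i ∧ ∀ j : Fin n, i < j → α j = β j

/-- The (non-strict) lexicographic order corresponding to `X₁ < X₂ < … < Xₙ`. -/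
def lexLe {n : ℕ} (α β : Fin n → ℕ) : Prop :=
  lexLt α β ∨ α = β

/-- Membership in the limiting set `E(D)`: `β ∉ D` and whenever `βᵢ ≠ 0`,
then `β − eᵢ ∈ D`. -/
def inE {n : ℕ} (D : Finset (Fin n → ℕ)) (β : Fin n → ℕ) : Prop :=
  β ∉ D ∧ ∀ i : Fin n, β i ≠ 0 → β - Pi.single i 1 ∈ D

/-- The coefficient of the monomial `X^α` in the multivariate polynomial `f`,
with the exponent given as a function `Fin n → ℕ`. -/
noncomputable def coeffv {n : ℕ} {R : Type*} [CommSemiring R]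
    (f : MvPolynomial (Fin n) R) (α : Fin n → ℕ) : R :=
  MvPolynomial.coeff (Finsupp.equivFunOnFinite.symm α) f

section Aux15

set_option linter.unusedSectionVars false

namespace Aux15

/-! ### Lexicographic order lemmas -/

lemma lexLt_irrefl {n : ℕ} (α : Fin n → ℕ) : ¬ lexLt α α := by
  rintro ⟨i, h, -⟩; exact lt_irrefl _ h

lemma lexLt_cons_iff {n : ℕ} {j j' : ℕ} {m t : Fin n → ℕ} :
    lexLt (Fin.cons j m) (Fin.cons j' t) ↔ lexLt m t ∨ (m = t ∧ j < j') := by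
  constructor
  · rintro ⟨i, hlt, hgt⟩
    induction i using Fin.cases with
    | zero =>
      right
      refine ⟨funext fun l => ?_, by simpa using hlt⟩
      simpa using hgt l.succ (Fin.succ_pos l)
    | succ i' =>
      left
      refine ⟨i', by simpa using hlt, fun l hl => ?_⟩
      simpa using hgt l.succ (by simpa [Fin.succ_lt_succ_iff] using hl)
  · rintro (⟨i, hlt, hgt⟩ | ⟨rfl, hj⟩)
    · refine ⟨i.succ, by simpa using hlt, fun l hl => ?_⟩
      have hl0 : l ≠ 0 := by
        rintro rfl
        exact absurd hl (by simp [Fin.lt_iff_val_lt_val])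
      obtain ⟨l', rfl⟩ := Fin.eq_succ_of_ne_zero hl0
      simpa using hgt l' (by simpa [Fin.succ_lt_succ_iff] using hl)
    · refine ⟨0, by simpa using hj, fun l hl => ?_⟩
      have hl0 : l ≠ 0 := by
        rintro rfl
        exact absurd hl (lt_irrefl _)
      obtain ⟨l', rfl⟩ := Fin.eq_succ_of_ne_zero hl0
      simp

/-! ### `coeffv` lemmas -/

lemma symm_cons {n : ℕ} (j : ℕ) (m : Fin n → ℕ) :
    (Finsupp.equivFunOnFinite.symm (Fin.cons j m) : Fin (n+1) →₀ ℕ) =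
      Finsupp.cons j (Finsupp.equivFunOnFinite.symm m) := by
  ext i
  induction i using Fin.cases with
  | zero => simp
  | succ i' => simp

lemma coeffv_cons {n : ℕ} (f : MvPolynomial (Fin (n+1)) k) (j : ℕ) (m : Fin n → ℕ) :
    coeffv ((MvPolynomial.finSuccEquiv k n f).coeff j) m = coeffv f (Fin.cons j m) := by
  unfold coeffv
  rw [MvPolynomial.finSuccEquiv_coeff_coeff, symm_cons]

lemma coeffv_zero {n : ℕ} (m : Fin n → ℕ) : coeffv (0 : MvPolynomial (Fin n) k) m = 0 := by
  simp [coeffv]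

lemma ne_zero_of_coeffv {n : ℕ} {f : MvPolynomial (Fin n) k} {m : Fin n → ℕ}
    (h : coeffv f m ≠ 0) : f ≠ 0 := by
  rintro rfl; exact h (coeffv_zero m)

lemma coeffv_add {n : ℕ} (f g : MvPolynomial (Fin n) k) (m : Fin n → ℕ) :
    coeffv (f + g) m = coeffv f m + coeffv g m := by
  simp [coeffv]

lemma coeffv_sub {n : ℕ} (f g : MvPolynomial (Fin n) k) (m : Fin n → ℕ) :
    coeffv (f - g) m = coeffv f m - coeffv g m := by
  simp [coeffv]

lemma coeffv_sum {n : ℕ} {X : Type*} (s : Finset X) (f : X → MvPolynomial (Fin n) k)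
    (m : Fin n → ℕ) : coeffv (∑ x ∈ s, f x) m = ∑ x ∈ s, coeffv (f x) m := by
  simp [coeffv, MvPolynomial.coeff_sum]

lemma coeffv_C_mul {n : ℕ} (c : k) (f : MvPolynomial (Fin n) k) (m : Fin n → ℕ) :
    coeffv (MvPolynomial.C c * f) m = c * coeffv f m := by
  simp [coeffv]

lemma coeffv_monomial {n : ℕ} (t m : Fin n → ℕ) (c : k) :
    coeffv (MvPolynomial.monomial (Finsupp.equivFunOnFinite.symm t) c) m =
      if m = t then c else 0 := by
  rw [coeffv, MvPolynomial.coeff_monomial]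
  congr 1
  simp [Equiv.apply_eq_iff_eq, eq_comm]

lemma eval_decomp {n : ℕ} (f : MvPolynomial (Fin (n+1)) k) (a : Fin (n+1) → k) :
    MvPolynomial.eval a f =
      Polynomial.eval (a 0)
        ((MvPolynomial.finSuccEquiv k n f).map (MvPolynomial.eval (Fin.tail a))) := by
  conv_lhs => rw [← Fin.cons_self_tail a]
  rw [MvPolynomial.eval_eq_eval_mv_eval']

lemma eval_evalC {n : ℕ} (φ : Polynomial (MvPolynomial (Fin n) k)) (a1 : k) (s : Fin n → k) :
    MvPolynomial.eval s (Polynomial.eval (MvPolynomial.C a1) φ) =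
      Polynomial.eval a1 (φ.map (MvPolynomial.eval s)) := by
  rw [Polynomial.eval_map]
  rw [show Polynomial.eval (MvPolynomial.C a1) φ = φ.eval₂ (RingHom.id _) (MvPolynomial.C a1)
    from rfl]
  rw [Polynomial.hom_eval₂]
  simp

lemma coeffv_evalC {n : ℕ} (φ : Polynomial (MvPolynomial (Fin n) k)) (a1 : k) (m : Fin n → ℕ) :
    coeffv (Polynomial.eval (MvPolynomial.C a1) φ) m =
      ∑ j ∈ Finset.range (φ.natDegree + 1), coeffv (φ.coeff j) m * a1 ^ j := by
  rw [Polynomial.eval_eq_sum_range, coeffv, MvPolynomial.coeff_sum]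
  refine Finset.sum_congr rfl fun j _ => ?_
  rw [← map_pow, mul_comm (φ.coeff j), MvPolynomial.coeff_C_mul, mul_comm]
  rfl

lemma coeff_mapC_mul_C {n : ℕ} (p : Polynomial k) (q : MvPolynomial (Fin n) k) (j : ℕ)
    (m : Fin n → ℕ) :
    coeffv (((p.map MvPolynomial.C) * Polynomial.C q).coeff j) m = p.coeff j * coeffv q m := by
  rw [Polynomial.coeff_mul_C, Polynomial.coeff_map, coeffv, MvPolynomial.coeff_C_mul]
  rfl

/-! ### Slices of a point set and membership in `DofA` -/

/-- The slice `H(a₁) = p⁻¹(a₁) ∩ A ⊆ kⁿ`. -/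
def sl {n : ℕ} (A : Finset (Fin (n+1) → k)) (a1 : k) : Finset (Fin n → k) :=
  (A.filter (fun a => a 0 = a1)).image (fun a => Fin.tail a)

/-- The set of first coordinates `a₁` of points of `A` such that `t ∈ D(H(a₁))`. -/
def Sset {n : ℕ} (A : Finset (Fin (n+1) → k)) (t : Fin n → ℕ) : Finset k :=
  (A.image (fun a => a 0)).filter (fun a1 => t ∈ DofA n (sl A a1))

lemma mem_sl {n : ℕ} {A : Finset (Fin (n+1) → k)} {a1 : k} {x : Fin n → k} :
    x ∈ sl A a1 ↔ ∃ a ∈ A, a 0 = a1 ∧ Fin.tail a = x := by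
  simp [sl, Finset.mem_image, Finset.mem_filter, and_assoc]

lemma mem_DofA_zero (A : Finset (Fin 0 → k)) (β : Fin 0 → ℕ) :
    β ∈ DofA 0 A ↔ A.Nonempty := by
  simp only [DofA, Finset.mem_image]
  constructor
  · rintro ⟨a, ha, -⟩; exact ⟨a, ha⟩
  · rintro ⟨a, ha⟩; exact ⟨a, ha, funext fun i => i.elim0⟩

lemma mem_DofA_succ {n : ℕ} (A : Finset (Fin (n+1) → k)) (β : Fin (n+1) → ℕ) :
    β ∈ DofA (n+1) A ↔ β 0 < (Sset A (Fin.tail β)).card := by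
  rw [show DofA (n+1) A =
      ((A.image (fun a => a 0)).biUnion (fun a1 => DofA n (sl A a1))).biUnion
        (fun dh =>
          (Finset.range ((Sset A dh).card)).image (fun j => Fin.cons j dh)) from rfl]
  constructor
  · intro h
    obtain ⟨dh, hdh, hmem⟩ := Finset.mem_biUnion.mp h
    obtain ⟨j, hj, hcons⟩ := Finset.mem_image.mp hmem
    have h0 : β 0 = j := by rw [← hcons]; simp
    have ht : Fin.tail β = dh := by rw [← hcons]; simp
    rw [h0, ht]
    exact Finset.mem_range.mp hj
  · intro h
    have hpos : 0 < (Sset A (Fin.tail β)).card := lt_of_le_of_lt (Nat.zero_le _) h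
    obtain ⟨a1, ha1⟩ := Finset.card_pos.mp hpos
    rw [Sset, Finset.mem_filter] at ha1
    refine Finset.mem_biUnion.mpr ⟨Fin.tail β, Finset.mem_biUnion.mpr ⟨a1, ha1.1, ha1.2⟩, ?_⟩
    exact Finset.mem_image.mpr ⟨β 0, Finset.mem_range.mpr h, Fin.cons_self_tail β⟩

/-- The statement of the main theorem, as a predicate. -/
def Good (n : ℕ) (A : Finset (Fin n → k)) (β : Fin n → ℕ) : Prop :=
  ∃ f : MvPolynomial (Fin n) k, f ≠ 0 ∧ (∀ a ∈ A, MvPolynomial.eval a f = 0) ∧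
    coeffv f β ≠ 0 ∧ ∀ γ : Fin n → ℕ, coeffv f γ ≠ 0 → γ ≠ β → lexLt γ β

/-! ### The two directions of the inductive step -/

set_option maxHeartbeats 400000 in
lemma step_mpr {n : ℕ}
    (ih : ∀ (B : Finset (Fin n → k)) (t : Fin n → ℕ), Good n B t ↔ t ∉ DofA n B)
    (A : Finset (Fin (n+1) → k)) (β : Fin (n+1) → ℕ) (hβ : β ∉ DofA (n+1) A) :
    Good (n+1) A β := by
  classical
  have hble : (Sset A (Fin.tail β)).card ≤ β 0 :=
    not_lt.mp (fun h => hβ ((mem_DofA_succ A β).mpr h))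
  set t := Fin.tail β with htdef
  set b := β 0 with hbdef
  set S := Sset A t with hS
  set T := (A.image (fun a => a 0)) \ S with hT
  -- normalized leading polynomials on the slices indexed by `T`
  have hex : ∀ a1 ∈ T, ∃ g : MvPolynomial (Fin n) k,
      (∀ x ∈ sl A a1, MvPolynomial.eval x g = 0) ∧ coeffv g t = 1 ∧
        (∀ m, coeffv g m ≠ 0 → m ≠ t → lexLt m t) := by
    intro a1 ha1
    have hnot : t ∉ DofA n (sl A a1) := by
      rw [hT, Finset.mem_sdiff] at ha1
      intro hmem
      exact ha1.2 (Finset.mem_filter.mpr ⟨ha1.1, hmem⟩)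
    obtain ⟨g', hg0, hvan, hc, hlead⟩ := (ih (sl A a1) t).mpr hnot
    refine ⟨MvPolynomial.C (coeffv g' t)⁻¹ * g', ?_, ?_, ?_⟩
    · intro x hx; rw [map_mul, MvPolynomial.eval_C, hvan x hx, mul_zero]
    · rw [coeffv_C_mul, inv_mul_cancel₀ hc]
    · intro m hm hmt
      refine hlead m (fun h0 => ?_) hmt
      rw [coeffv_C_mul, h0, mul_zero] at hm
      exact hm rfl
  choose g hg1 hg2 hg3 using hex
  set M : MvPolynomial (Fin n) k :=
    MvPolynomial.monomial (Finsupp.equivFunOnFinite.symm t) 1 with hM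
  set V0 : Polynomial k :=
    (∏ a1 ∈ S, (Polynomial.X - Polynomial.C a1)) * Polynomial.X ^ (b - S.card) with hV0
  have hV0monic : V0.Monic :=
    (Polynomial.monic_prod_of_monic _ _ fun a1 _ => Polynomial.monic_X_sub_C a1).mul
      (Polynomial.monic_X_pow _)
  have hV0deg : V0.natDegree = b := by
    rw [hV0, Polynomial.Monic.natDegree_mul
        (Polynomial.monic_prod_of_monic _ _ fun a1 _ => Polynomial.monic_X_sub_C a1)
        (Polynomial.monic_X_pow _),
      Polynomial.natDegree_prod_of_monic _ _ (fun a1 _ => Polynomial.monic_X_sub_C a1)]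
    simp only [Polynomial.natDegree_X_sub_C, Polynomial.natDegree_X_pow, Finset.sum_const,
      smul_eq_mul, mul_one]
    exact Nat.add_sub_cancel' hble
  set F : Polynomial (MvPolynomial (Fin n) k) :=
    Polynomial.C M + ∑ x ∈ T.attach,
      (Lagrange.basis T id x.1).map MvPolynomial.C * Polynomial.C (g x.1 x.2 - M) with hF
  set φ := (V0.map MvPolynomial.C) * F with hφ
  set f := (MvPolynomial.finSuccEquiv k n).symm φ with hfdef
  have hφf : MvPolynomial.finSuccEquiv k n f = φ := by
    rw [hfdef]; exact AlgEquiv.apply_symm_apply _ _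
  -- the coefficient formula for `f`
  have hφeq : φ = (V0.map MvPolynomial.C) * Polynomial.C M +
      ∑ x ∈ T.attach,
        ((V0 * Lagrange.basis T id x.1).map MvPolynomial.C) * Polynomial.C (g x.1 x.2 - M) := by
    rw [hφ, hF, mul_add, Finset.mul_sum]
    rw [add_right_inj]
    refine Finset.sum_congr rfl fun x _ => ?_
    rw [← mul_assoc, ← Polynomial.map_mul]
  have hcoeff : ∀ (j : ℕ) (m : Fin n → ℕ),
      coeffv f (Fin.cons j m) =
        V0.coeff j * (if m = t then 1 else 0) +
          ∑ x ∈ T.attach,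
            ((V0 * Lagrange.basis T id x.1).coeff j) * coeffv (g x.1 x.2 - M) m := by
    intro j m
    rw [← coeffv_cons, hφf, hφeq, Polynomial.coeff_add, Polynomial.finset_sum_coeff,
      coeffv_add, coeffv_sum, coeff_mapC_mul_C, hM, coeffv_monomial]
    congr 1
    exact Finset.sum_congr rfl fun x _ => coeff_mapC_mul_C _ _ _ _
  -- the coefficient of `X^β` is 1
  have hsum0 : ∀ (j : ℕ), ∑ x ∈ T.attach,
      ((V0 * Lagrange.basis T id x.1).coeff j) * coeffv (g x.1 x.2 - M) t = 0 := by
    intro j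
    refine Finset.sum_eq_zero fun x _ => ?_
    rw [coeffv_sub, hg2, hM, coeffv_monomial, if_pos rfl, sub_self, mul_zero]
  have hβcons : β = Fin.cons b t := (Fin.cons_self_tail β).symm
  have hft : coeffv f β = 1 := by
    rw [hβcons, hcoeff, hsum0, if_pos rfl, add_zero, mul_one, ← hV0deg]
    exact hV0monic.coeff_natDegree
  -- vanishing on `A`
  have hvanish : ∀ a ∈ A, MvPolynomial.eval a f = 0 := by
    intro a ha
    rw [eval_decomp, hφf, hφ, Polynomial.map_mul, Polynomial.eval_mul]
    have hmap : (V0.map MvPolynomial.C).map (MvPolynomial.eval (Fin.tail a)) = V0 := by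
      rw [Polynomial.map_map]
      have hcomp : (MvPolynomial.eval (Fin.tail a)).comp
          (MvPolynomial.C : k →+* MvPolynomial (Fin n) k) = RingHom.id k :=
        RingHom.ext fun c => MvPolynomial.eval_C _
      rw [hcomp, Polynomial.map_id]
    have haP : a 0 ∈ A.image (fun a => a 0) := Finset.mem_image.mpr ⟨a, ha, rfl⟩
    by_cases hin : a 0 ∈ S
    · rw [hmap]
      have hz : Polynomial.eval (a 0) V0 = 0 := by
        rw [hV0, Polynomial.eval_mul, Polynomial.eval_prod,
          Finset.prod_eq_zero hin (by simp), zero_mul]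
      rw [hz, zero_mul]
    · have hinT : a 0 ∈ T := by rw [hT]; exact Finset.mem_sdiff.mpr ⟨haP, hin⟩
      have hsltail : Fin.tail a ∈ sl A (a 0) := mem_sl.mpr ⟨a, ha, rfl, rfl⟩
      have hFmap : Polynomial.eval (a 0) (F.map (MvPolynomial.eval (Fin.tail a))) =
          MvPolynomial.eval (Fin.tail a) (g (a 0) hinT) := by
        rw [hF, Polynomial.map_add, Polynomial.map_C, Polynomial.eval_add, Polynomial.eval_C,
          Polynomial.map_sum, Polynomial.eval_finset_sum]
        rw [Finset.sum_eq_single_of_mem (⟨a 0, hinT⟩ : {x // x ∈ T}) (Finset.mem_attach _ _)]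
        · rw [Polynomial.map_mul, Polynomial.eval_mul, Polynomial.map_map, Polynomial.map_C,
            Polynomial.eval_C]
          have hcomp : (MvPolynomial.eval (Fin.tail a)).comp
              (MvPolynomial.C : k →+* MvPolynomial (Fin n) k) = RingHom.id k :=
            RingHom.ext fun c => MvPolynomial.eval_C _
          have hb1 : Polynomial.eval (a 0) (Lagrange.basis T id (a 0)) = 1 :=
            Lagrange.eval_basis_self (Set.injOn_id _) hinT
          rw [hcomp, Polynomial.map_id, hb1, one_mul, map_sub]
          ring
        · intro x _ hx
          rw [Polynomial.map_mul, Polynomial.eval_mul, Polynomial.map_map, Polynomial.map_C,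
            Polynomial.eval_C]
          have hcomp : (MvPolynomial.eval (Fin.tail a)).comp
              (MvPolynomial.C : k →+* MvPolynomial (Fin n) k) = RingHom.id k :=
            RingHom.ext fun c => MvPolynomial.eval_C _
          rw [hcomp, Polynomial.map_id]
          have hxne : x.1 ≠ a 0 := fun h => hx (Subtype.ext h)
          have hb0 : Polynomial.eval (a 0) (Lagrange.basis T id x.1) = 0 :=
            Lagrange.eval_basis_of_ne (v := id) hxne hinT
          rw [hb0, zero_mul]
      rw [hFmap, hg1 (a 0) hinT (Fin.tail a) hsltail, mul_zero]
  -- conclusion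
  refine ⟨f, ne_zero_of_coeffv (by rw [hft]; exact one_ne_zero), hvanish,
    (by rw [hft]; exact one_ne_zero), ?_⟩
  intro γ hγ hγβ
  have hγcons : γ = Fin.cons (γ 0) (Fin.tail γ) := (Fin.cons_self_tail γ).symm
  rw [hγcons, hcoeff] at hγ
  by_cases hm : Fin.tail γ = t
  · rw [hm, hsum0, if_pos rfl, add_zero, mul_one] at hγ
    have hle : γ 0 ≤ b := hV0deg ▸ Polynomial.le_natDegree_of_ne_zero hγ
    have hne : γ 0 ≠ b := by
      intro h
      apply hγβ
      rw [hγcons, hβcons, h, hm]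
    rw [hγcons, hβcons, lexLt_cons_iff]
    exact Or.inr ⟨hm, lt_of_le_of_ne hle hne⟩
  · have hex2 : ∃ x ∈ T.attach,
        ((V0 * Lagrange.basis T id x.1).coeff (γ 0)) * coeffv (g x.1 x.2 - M) (Fin.tail γ) ≠ 0 := by
      by_contra h
      push_neg at h
      rw [Finset.sum_eq_zero h, if_neg hm, mul_zero, add_zero] at hγ
      exact hγ rfl
    obtain ⟨x, -, hx⟩ := hex2
    have hgm : coeffv (g x.1 x.2) (Fin.tail γ) ≠ 0 := by
      have h1 := right_ne_zero_of_mul hx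
      rw [coeffv_sub, hM, coeffv_monomial, if_neg hm, sub_zero] at h1
      exact h1
    have hlt : lexLt (Fin.tail γ) t := hg3 x.1 x.2 _ hgm hm
    rw [hγcons, hβcons, lexLt_cons_iff]
    exact Or.inl hlt

lemma step_mp {n : ℕ}
    (ih : ∀ (B : Finset (Fin n → k)) (t : Fin n → ℕ), Good n B t ↔ t ∉ DofA n B)
    (A : Finset (Fin (n+1) → k)) (β : Fin (n+1) → ℕ) (hG : Good (n+1) A β) :
    β ∉ DofA (n+1) A := by
  classical
  obtain ⟨f, hf0, hvan, hcβ, hlead⟩ := hG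
  intro hmemD
  have hmem : β 0 < (Sset A (Fin.tail β)).card := (mem_DofA_succ A β).mp hmemD
  set φ := MvPolynomial.finSuccEquiv k n f with hφ
  set N := φ.natDegree with hN
  set q : Polynomial k :=
    ∑ j ∈ Finset.range (N+1), Polynomial.monomial j (coeffv f (Fin.cons j (Fin.tail β))) with hq
  have hqcoeff : ∀ i, q.coeff i =
      if i ∈ Finset.range (N+1) then coeffv f (Fin.cons i (Fin.tail β)) else 0 := by
    intro i
    rw [hq, Polynomial.finset_sum_coeff]
    simp only [Polynomial.coeff_monomial]
    exact Finset.sum_ite_eq' (Finset.range (N+1)) i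
      (fun j => coeffv f (Fin.cons j (Fin.tail β)))
  have hzero_gt : ∀ j, β 0 < j → coeffv f (Fin.cons j (Fin.tail β)) = 0 := by
    intro j hj
    by_contra hne
    have hneβ : Fin.cons j (Fin.tail β) ≠ β := by
      intro h
      have : j = β 0 := by rw [← h]; simp
      omega
    have hlt := hlead _ hne hneβ
    have h2 : lexLt (Fin.cons j (Fin.tail β)) (Fin.cons (β 0) (Fin.tail β)) := by
      rw [Fin.cons_self_tail]; exact hlt
    rcases lexLt_cons_iff.mp h2 with h | ⟨-, h⟩
    · exact lexLt_irrefl _ h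
    · omega
  have hqdeg : q.natDegree ≤ β 0 := by
    rw [Polynomial.natDegree_le_iff_coeff_eq_zero]
    intro m hm
    rw [hqcoeff]
    split
    · exact hzero_gt m hm
    · rfl
  have hb_le_N : β 0 ≤ N := by
    apply Polynomial.le_natDegree_of_ne_zero
    intro h
    apply hcβ
    calc coeffv f β = coeffv f (Fin.cons (β 0) (Fin.tail β)) := by rw [Fin.cons_self_tail]
      _ = coeffv (φ.coeff (β 0)) (Fin.tail β) := (coeffv_cons f _ _).symm
      _ = 0 := by rw [h, coeffv_zero]
  have hq0 : q.coeff (β 0) ≠ 0 := by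
    rw [hqcoeff, if_pos (Finset.mem_range.mpr (Nat.lt_succ_of_le hb_le_N))]
    have : Fin.cons (β 0) (Fin.tail β) = β := Fin.cons_self_tail β
    rw [this]
    exact hcβ
  have hqne : q ≠ 0 := fun h => hq0 (by rw [h]; simp)
  have heval : ∀ a1 ∈ Sset A (Fin.tail β), q.eval a1 = 0 := by
    intro a1 ha1
    rw [Sset, Finset.mem_filter] at ha1
    set g := Polynomial.eval (MvPolynomial.C a1) φ with hg
    have hqeval : q.eval a1 = coeffv g (Fin.tail β) := by
      rw [hg, coeffv_evalC, hq, Polynomial.eval_finset_sum]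
      refine Finset.sum_congr rfl fun j _ => ?_
      rw [Polynomial.eval_monomial, coeffv_cons]
    have hgvan : ∀ x ∈ sl A a1, MvPolynomial.eval x g = 0 := by
      intro x hx
      obtain ⟨a, haA, ha0, hax⟩ := mem_sl.mp hx
      rw [hg, eval_evalC, ← hax, ← ha0, ← eval_decomp]
      exact hvan a haA
    have hglead : ∀ m, coeffv g m ≠ 0 → m ≠ Fin.tail β → lexLt m (Fin.tail β) := by
      intro m hm hmt
      rw [hg, coeffv_evalC] at hm
      have hex : ∃ j ∈ Finset.range (N+1), coeffv (φ.coeff j) m * a1 ^ j ≠ 0 := by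
        by_contra h
        push_neg at h
        exact hm (Finset.sum_eq_zero h)
      obtain ⟨j, -, hj⟩ := hex
      have hfj : coeffv f (Fin.cons j m) ≠ 0 := by
        have h1 := left_ne_zero_of_mul hj
        rwa [coeffv_cons] at h1
      have hne : Fin.cons j m ≠ β := by
        intro h
        apply hmt
        rw [← h, Fin.tail_cons]
      have hlt := hlead _ hfj hne
      have h2 : lexLt (Fin.cons j m) (Fin.cons (β 0) (Fin.tail β)) := by
        rw [Fin.cons_self_tail]; exact hlt
      rcases lexLt_cons_iff.mp h2 with h | ⟨h, -⟩
      · exact h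
      · exact absurd h hmt
    have hzero : coeffv g (Fin.tail β) = 0 := by
      by_contra hne0
      exact (ih _ _).mp ⟨g, ne_zero_of_coeffv hne0, hgvan, hne0, hglead⟩ ha1.2
    rw [hqeval, hzero]
  exact hqne (Polynomial.eq_zero_of_natDegree_lt_card_of_eval_eq_zero' q
    (Sset A (Fin.tail β)) heval (lt_of_le_of_lt hqdeg hmem))

lemma main (n : ℕ) (A : Finset (Fin n → k)) (β : Fin n → ℕ) :
    Good n A β ↔ β ∉ DofA n A := by
  induction n with
  | zero =>
    have hβ0 : (Finsupp.equivFunOnFinite.symm β : Fin 0 →₀ ℕ) = 0 := by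
      ext i; exact i.elim0
    constructor
    · rintro ⟨f, hf0, hvan, hcβ, -⟩ hmemD
      obtain ⟨a, ha⟩ := (mem_DofA_zero A β).mp hmemD
      obtain ⟨c, rfl⟩ := MvPolynomial.C_surjective (Fin 0) f
      have h1 : coeffv (MvPolynomial.C c : MvPolynomial (Fin 0) k) β = c := by
        rw [coeffv, hβ0, MvPolynomial.coeff_zero_C]
      have h2 := hvan a ha
      rw [MvPolynomial.eval_C] at h2
      rw [h1, h2] at hcβ
      exact hcβ rfl
    · intro hne
      refine ⟨1, one_ne_zero, ?_, ?_, ?_⟩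
      · intro a ha
        exact ((hne ((mem_DofA_zero A β).mpr ⟨a, ha⟩))).elim
      · rw [coeffv, hβ0, MvPolynomial.coeff_zero_one]
        exact one_ne_zero
      · intro γ hγ hγβ
        exact absurd (funext fun i => i.elim0 : γ = β) hγβ
  | succ n ihn =>
    exact ⟨fun h => step_mp ihn A β h, fun h => step_mpr ihn A β h⟩

end Aux15

end Aux15

theorem stmt_15 (n : ℕ) (A : Finset (Fin n → k)) (β : Fin n → ℕ) :
    (∃ f : MvPolynomial (Fin n) k, f ≠ 0 ∧ (∀ a ∈ A, MvPolynomial.eval a f = 0) ∧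
        coeffv f β ≠ 0 ∧ ∀ γ : Fin n → ℕ, coeffv f γ ≠ 0 → γ ≠ β → lexLt γ β) ↔
      β ∉ DofA n A :=
  Aux15.main n A β
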